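/- Let A_T > 0 and T·A_T ≥ 1. Then there exists no differentiable function A : [0, T] → ℝ satisfying A'(t) = -2·A(t)² for all t ∈ [0, T] together with A(T) = A_T. -/

import Mathlib

/-- For `a = 0`, terminal data `A_T > 0` and `T·A_T ≥ 1`, there is no differentiable
function `A : [0,T] → ℝ` solving the Riccati equation `A' = -2A²` on `[0, T]` with
`A(T) = A_T`. -/
theorem riccati_nonexistence_a_zero
    (T A_T : ℝ) (hAT : 0 < A_T) (hT : 1 ≤ T * A_T) :
    ¬ ∃ A : ℝ → ℝ,
        (∀ t ∈ Set.Icc (0 : ℝ) T, HasDerivAt A (-2 * (A t) ^ 2) t) ∧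
        A T = A_T := by
  rintro ⟨A, hA, hATval⟩
  have hTpos : 0 < T := by nlinarith
  have hTmem : T ∈ Set.Icc (0 : ℝ) T := ⟨le_of_lt hTpos, le_refl T⟩
  have h0mem : (0 : ℝ) ∈ Set.Icc (0 : ℝ) T := ⟨le_refl 0, le_of_lt hTpos⟩
  have hconv : Convex ℝ (Set.Icc (0 : ℝ) T) := convex_Icc 0 T
  have hint : interior (Set.Icc (0 : ℝ) T) = Set.Ioo 0 T := interior_Icc
  have hcont : ContinuousOn A (Set.Icc (0 : ℝ) T) := fun t ht =>
    (hA t ht).continuousAt.continuousWithinAt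
  -- A is antitone on [0,T]
  have hanti : AntitoneOn A (Set.Icc (0 : ℝ) T) := by
    apply antitoneOn_of_deriv_nonpos hconv hcont
    · intro x hx
      rw [hint] at hx
      exact (hA x (Set.mem_Icc_of_Ioo hx)).differentiableAt.differentiableWithinAt
    · intro x hx
      rw [hint] at hx
      rw [(hA x (Set.mem_Icc_of_Ioo hx)).deriv]
      nlinarith [sq_nonneg (A x)]
  -- A is positive on [0,T]
  have hpos : ∀ t ∈ Set.Icc (0 : ℝ) T, 0 < A t := by
    intro t ht
    have := hanti ht hTmem ht.2
    rw [hATval] at this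
    linarith
  -- g t = (A t)⁻¹ - 2*t has derivative 0 on [0,T]
  set g : ℝ → ℝ := fun t => (A t)⁻¹ - 2 * t with hg
  have hgderiv : ∀ t ∈ Set.Icc (0 : ℝ) T, HasDerivAt g 0 t := by
    intro t ht
    have hne : A t ≠ 0 := ne_of_gt (hpos t ht)
    have h1 : HasDerivAt (fun s => (A s)⁻¹) (-(-2 * (A t) ^ 2) / (A t) ^ 2) t :=
      (hA t ht).inv hne
    have h2 : HasDerivAt (fun s => 2 * s) 2 t := by
      simpa using (hasDerivAt_id t).const_mul (2 : ℝ)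
    have := h1.sub h2
    have hval : -(-2 * (A t) ^ 2) / (A t) ^ 2 - 2 = 0 := by
      field_simp
      ring
    rwa [hval] at this
  have hgcont : ContinuousOn g (Set.Icc (0 : ℝ) T) := fun t ht =>
    (hgderiv t ht).continuousAt.continuousWithinAt
  have hgdiff : DifferentiableOn ℝ g (interior (Set.Icc (0 : ℝ) T)) := by
    intro x hx
    rw [hint] at hx
    exact (hgderiv x (Set.mem_Icc_of_Ioo hx)).differentiableAt.differentiableWithinAt
  have hmono : MonotoneOn g (Set.Icc (0 : ℝ) T) := by
    apply monotoneOn_of_deriv_nonneg hconv hgcont hgdiff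
    intro x hx
    rw [hint] at hx
    rw [(hgderiv x (Set.mem_Icc_of_Ioo hx)).deriv]
  have hanti' : AntitoneOn g (Set.Icc (0 : ℝ) T) := by
    apply antitoneOn_of_deriv_nonpos hconv hgcont hgdiff
    intro x hx
    rw [hint] at hx
    rw [(hgderiv x (Set.mem_Icc_of_Ioo hx)).deriv]
  have heq : g 0 = g T :=
    le_antisymm (hmono h0mem hTmem hTpos.le) (hanti' h0mem hTmem hTpos.le)
  have hA0 : 0 < A 0 := hpos 0 h0mem
  have hAinv0 : 0 < (A 0)⁻¹ := inv_pos.mpr hA0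
  have hATinv : (A_T)⁻¹ ≤ T := by
    rw [inv_le_iff_one_le_mul₀ hAT]
    linarith [mul_comm T A_T]
  have : (A 0)⁻¹ - 0 = (A_T)⁻¹ - 2 * T := by
    simpa [hg, hATval] using heq
  linarith
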